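/- The bi-invariant geodesic regression estimator is equivariant under joint left translations: if (ĝ₀, ĝ₁) satisfies the defining equations Σᵢ (1−tᵢ)² (d_{ĝ₀}γ(tᵢ; ·, ĝ₁))^{-1}(Log_{γ(tᵢ)}(fᵢ)) = 0 and Σᵢ tᵢ² (d_{ĝ₁}γ(tᵢ; ĝ₀, ·))^{-1}(Log_{γ(tᵢ)}(fᵢ)) = 0 for data (fᵢ, tᵢ), then for any h ∈ G the pair (hĝ₀, hĝ₁) satisfies the same equations for the data (hfᵢ, tᵢ). -/

import Mathlib

section

variable {E : Type*} [NormedAddCommGroup E] [NormedSpace ℝ E]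
  {H : Type*} [TopologicalSpace H] (I : ModelWithCorners ℝ E H)
  {G : Type*} [TopologicalSpace G] [ChartedSpace H G] [Group G]

/-- Geodesic of the canonical Cartan–Schouten connection between `g₀` and `g₁`,
parametrized by its endpoints: `γ(t; g₀, g₁) = g₀ · exp(t · log(g₀⁻¹ g₁))`,
for abstract group exponential `exp` and logarithm `log`. -/
def ccsGeodesic (expm : E → G) (logm : G → E) (t : ℝ) (g₀ g₁ : G) : G :=
  g₀ * expm (t • logm (g₀⁻¹ * g₁))

/-- Connection logarithm of the CCS connection: `Log_g(f) = d_e L_g (log(g⁻¹ f))`. -/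
noncomputable def ccsLog [LieGroup I (⊤ : ℕ∞) G] (logm : G → E) (g f : G) :
    TangentSpace I g :=
  mfderiv I I (fun x : G => g * x) (1 : G) (logm (g⁻¹ * f))

omit [TopologicalSpace G] in
lemma ccsGeodesic_left (expm : E → G) (logm : G → E) (t : ℝ) (h g₀ g₁ : G) :
    ccsGeodesic expm logm t (h * g₀) (h * g₁) = h * ccsGeodesic expm logm t g₀ g₁ := by
  have : (h * g₀)⁻¹ * (h * g₁) = g₀⁻¹ * g₁ := by group
  simp [ccsGeodesic, this, mul_assoc]

lemma mdiffAt_mul_left [LieGroup I (⊤ : ℕ∞) G] (a b : G) :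
    MDifferentiableAt I I (fun x : G => a * x) b :=
  (contMDiff_mul_left (I := I) (n := ((⊤ : ℕ∞) : WithTop ℕ∞))).mdifferentiableAt (by simp)

lemma mfderiv_base_congr [LieGroup I (⊤ : ℕ∞) G] {F : G → G} {a b : G} (hab : a = b) :
    (mfderiv I I F a : E →L[ℝ] E) = (mfderiv I I F b : E →L[ℝ] E) := by subst hab; rfl

lemma ccsLog_congr [LieGroup I (⊤ : ℕ∞) G] (logm : G → E) {a b : G} (hab : a = b) (c : G) :
    (ccsLog I logm a c : E) = (ccsLog I logm b c : E) := by subst hab; rfl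

lemma ccsLog_left [LieGroup I (⊤ : ℕ∞) G] (logm : G → E) (h g f : G) :
    ccsLog I logm (h * g) (h * f)
      = mfderiv I I (fun x : G => h * x) g (ccsLog I logm g f) := by
  have hinv : (h * g)⁻¹ * (h * f) = g⁻¹ * f := by group
  have h2 : mfderiv I I (fun x : G => (h * g) * x) 1
      = mfderiv I I ((fun x : G => h * x) ∘ (fun x : G => g * x)) 1 :=
    Filter.EventuallyEq.mfderiv_eq
      (Filter.Eventually.of_forall fun x => by simp [mul_assoc])
  have h3 := mfderiv_comp_apply (I := I) (I' := I) (I'' := I) (x := (1 : G))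
    (f := fun x : G => g * x) (g := fun x : G => h * x)
    (mdiffAt_mul_left I h (g * 1)) (mdiffAt_mul_left I g 1)
    (logm (g⁻¹ * f))
  simp only [ccsLog, hinv]
  rw [h2]
  rw [mfderiv_base_congr I (mul_one g)] at h3
  exact h3

lemma mdiffAt_of_equiv [LieGroup I (⊤ : ℕ∞) G] [Nontrivial E] {F : G → G} {x : G} (D : E ≃L[ℝ] E)
    (hD : (D : E →L[ℝ] E) = mfderiv I I F x) : MDifferentiableAt I I F x := by
  by_contra hdiff
  rw [mfderiv_zero_of_not_mdifferentiableAt hdiff] at hD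
  obtain ⟨a, ha⟩ := exists_ne (0 : E)
  apply ha
  have hz : D a = 0 := by
    have : (D : E →L[ℝ] E) a = 0 := by rw [hD]; rfl
    exact this
  calc a = D.symm (D a) := (D.symm_apply_apply a).symm
  _ = D.symm 0 := by rw [hz]
  _ = 0 := by simp

lemma key_step [LieGroup I (⊤ : ℕ∞) G] [Nontrivial E] (h : G) {F F' : G → G} {x : G}
    (hFF' : ∀ y : G, h * F y = F' (h * y))
    (D D' : E ≃L[ℝ] E)
    (hD : (D : E →L[ℝ] E) = mfderiv I I F x)
    (hD' : (D' : E →L[ℝ] E) = mfderiv I I F' (h * x))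
    (v : E) :
    D'.symm (mfderiv I I (fun z : G => h * z) (F x) v)
      = mfderiv I I (fun z : G => h * z) x (D.symm v) := by
  have hF : MDifferentiableAt I I F x := mdiffAt_of_equiv I D hD
  have hF' : MDifferentiableAt I I F' (h * x) := mdiffAt_of_equiv I D' hD'
  have hDapp : ∀ u : E, D u = mfderiv I I F x u := fun u => by rw [← hD]; rfl
  have hD'app : ∀ u : E, D' u = mfderiv I I F' (h * x) u := fun u => by rw [← hD']; rfl
  set w : E := D.symm v with hw
  have hv : v = D w := by rw [hw, D.apply_symm_apply]
  have hA := mfderiv_comp_apply (I := I) (I' := I) (I'' := I) (x := x)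
      (f := F) (g := fun z : G => h * z) (mdiffAt_mul_left I h (F x)) hF w
  have hB := mfderiv_comp_apply (I := I) (I' := I) (I'' := I) (x := x)
      (f := fun z : G => h * z) (g := F') hF' (mdiffAt_mul_left I h x) w
  have h1 : (mfderiv I I ((fun z : G => h * z) ∘ F) x : E →L[ℝ] E)
      = mfderiv I I (F' ∘ (fun z : G => h * z)) x :=
    Filter.EventuallyEq.mfderiv_eq (Filter.Eventually.of_forall fun y => by
      simp only [Function.comp_apply]; exact hFF' y)
  have hkey : mfderiv I I (fun z : G => h * z) (F x) (D w)
      = D' (mfderiv I I (fun z : G => h * z) x w) := by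
    rw [hDapp w]
    exact hA.symm.trans ((congrArg (fun T : E →L[ℝ] E => T w) h1).trans
      (hB.trans (hD'app _).symm))
  rw [hv, hkey]
  exact D'.symm_apply_apply _

/-- The bi-invariant geodesic regression estimator is equivariant
under joint left translations: if `(g₀, g₁)` satisfies the defining equations
`Σᵢ (1−tᵢ)² (d_{g₀}γ(tᵢ; ·, g₁))⁻¹(Log_{γ(tᵢ)}(fᵢ)) = 0` and
`Σᵢ tᵢ² (d_{g₁}γ(tᵢ; g₀, ·))⁻¹(Log_{γ(tᵢ)}(fᵢ)) = 0` for the data `(fᵢ, tᵢ)`, then for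
any `h ∈ G` the pair `(hg₀, hg₁)` satisfies the same equations for the data `(hfᵢ, tᵢ)`.
The invertibility of the partial differentials of the geodesic boundary map (at the
original and the translated pair) is encoded by the continuous linear equivalences
`D₀ i, D₁ i, D₀' i, D₁' i` whose underlying maps are the respective `mfderiv`s. -/
theorem stmt10 [LieGroup I (⊤ : ℕ∞) G] (expm : E → G) (logm : G → E)
    (N : ℕ) (f : Fin N → G) (t : Fin N → ℝ) (ht : ∀ i, t i ∈ Set.Icc (0 : ℝ) 1)
    (g₀ g₁ h : G)
    (D₀ D₁ D₀' D₁' : Fin N → (E ≃L[ℝ] E))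
    (hD₀ : ∀ i, (D₀ i : E →L[ℝ] E)
      = mfderiv I I (fun x : G => ccsGeodesic expm logm (t i) x g₁) g₀)
    (hD₁ : ∀ i, (D₁ i : E →L[ℝ] E)
      = mfderiv I I (fun y : G => ccsGeodesic expm logm (t i) g₀ y) g₁)
    (hD₀' : ∀ i, (D₀' i : E →L[ℝ] E)
      = mfderiv I I (fun x : G => ccsGeodesic expm logm (t i) x (h * g₁)) (h * g₀))
    (hD₁' : ∀ i, (D₁' i : E →L[ℝ] E)
      = mfderiv I I (fun y : G => ccsGeodesic expm logm (t i) (h * g₀) y) (h * g₁))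
    (heq₀ : ∑ i, (1 - t i) ^ 2 •
      (D₀ i).symm (ccsLog I logm (ccsGeodesic expm logm (t i) g₀ g₁) (f i)) = 0)
    (heq₁ : ∑ i, (t i) ^ 2 •
      (D₁ i).symm (ccsLog I logm (ccsGeodesic expm logm (t i) g₀ g₁) (f i)) = 0) :
    (∑ i, (1 - t i) ^ 2 •
      (D₀' i).symm
        (ccsLog I logm (ccsGeodesic expm logm (t i) (h * g₀) (h * g₁)) (h * f i)) = 0) ∧
    (∑ i, (t i) ^ 2 •
      (D₁' i).symm
        (ccsLog I logm (ccsGeodesic expm logm (t i) (h * g₀) (h * g₁)) (h * f i)) = 0) := by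
  by_cases hs : Subsingleton E
  · exact ⟨Subsingleton.elim _ _, Subsingleton.elim _ _⟩
  haveI : Nontrivial E := not_subsingleton_iff_nontrivial.mp hs
  have e1 : ∀ i, (ccsLog I logm (ccsGeodesic expm logm (t i) (h * g₀) (h * g₁)) (h * f i) : E)
      = mfderiv I I (fun z : G => h * z) (ccsGeodesic expm logm (t i) g₀ g₁)
          (ccsLog I logm (ccsGeodesic expm logm (t i) g₀ g₁) (f i)) := fun i => by
    rw [ccsLog_congr I logm (ccsGeodesic_left expm logm (t i) h g₀ g₁) (h * f i)]
    exact ccsLog_left I logm h _ (f i)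
  constructor
  · have hterm : ∀ i, (D₀' i).symm
        (ccsLog I logm (ccsGeodesic expm logm (t i) (h * g₀) (h * g₁)) (h * f i))
        = mfderiv I I (fun z : G => h * z) g₀
            ((D₀ i).symm (ccsLog I logm (ccsGeodesic expm logm (t i) g₀ g₁) (f i))) := by
      intro i
      rw [e1 i]
      exact key_step I h
        (F := fun x : G => ccsGeodesic expm logm (t i) x g₁)
        (F' := fun x : G => ccsGeodesic expm logm (t i) x (h * g₁)) (x := g₀)
        (fun y => (ccsGeodesic_left expm logm (t i) h y g₁).symm)
        (D₀ i) (D₀' i) (hD₀ i) (hD₀' i) _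
    calc ∑ i, (1 - t i) ^ 2 • (D₀' i).symm
          (ccsLog I logm (ccsGeodesic expm logm (t i) (h * g₀) (h * g₁)) (h * f i))
        = @id E (∑ i, (mfderiv I I (fun z : G => h * z) g₀ : E →L[ℝ] E)
            ((1 - t i) ^ 2 • (D₀ i).symm
              (ccsLog I logm (ccsGeodesic expm logm (t i) g₀ g₁) (f i)))) := by
          refine Finset.sum_congr rfl fun i _ => ?_
          rw [hterm i]
          exact (map_smul _ _ _).symm
      _ = @id E ((mfderiv I I (fun z : G => h * z) g₀ : E →L[ℝ] E)
            (∑ i, (1 - t i) ^ 2 • (D₀ i).symm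
              (ccsLog I logm (ccsGeodesic expm logm (t i) g₀ g₁) (f i)))) :=
          (map_sum _ _ _).symm
      _ = 0 := (congrArg (mfderiv I I (fun z : G => h * z) g₀ : E →L[ℝ] E) heq₀).trans (map_zero _)
  · have hterm : ∀ i, (D₁' i).symm
        (ccsLog I logm (ccsGeodesic expm logm (t i) (h * g₀) (h * g₁)) (h * f i))
        = mfderiv I I (fun z : G => h * z) g₁
            ((D₁ i).symm (ccsLog I logm (ccsGeodesic expm logm (t i) g₀ g₁) (f i))) := by
      intro i
      rw [e1 i]
      exact key_step I h
        (F := fun y : G => ccsGeodesic expm logm (t i) g₀ y)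
        (F' := fun y : G => ccsGeodesic expm logm (t i) (h * g₀) y) (x := g₁)
        (fun y => (ccsGeodesic_left expm logm (t i) h g₀ y).symm)
        (D₁ i) (D₁' i) (hD₁ i) (hD₁' i) _
    calc ∑ i, (t i) ^ 2 • (D₁' i).symm
          (ccsLog I logm (ccsGeodesic expm logm (t i) (h * g₀) (h * g₁)) (h * f i))
        = @id E (∑ i, (mfderiv I I (fun z : G => h * z) g₁ : E →L[ℝ] E)
            ((t i) ^ 2 • (D₁ i).symm
              (ccsLog I logm (ccsGeodesic expm logm (t i) g₀ g₁) (f i)))) := by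
          refine Finset.sum_congr rfl fun i _ => ?_
          rw [hterm i]
          exact (map_smul _ _ _).symm
      _ = @id E ((mfderiv I I (fun z : G => h * z) g₁ : E →L[ℝ] E)
            (∑ i, (t i) ^ 2 • (D₁ i).symm
              (ccsLog I logm (ccsGeodesic expm logm (t i) g₀ g₁) (f i)))) :=
          (map_sum _ _ _).symm
      _ = 0 := (congrArg (mfderiv I I (fun z : G => h * z) g₁ : E →L[ℝ] E) heq₁).trans (map_zero _)


end
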